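/- Let k ≥ 1 and n ≥ 3 be integers. Then the number of digitally convex sets of the k-th power of the cycle on n vertices equals the number of cyclic binary strings of length n all of whose blocks have length at least k+1; i.e., n_D(C_n^k) = |B_{k+1,n}|. -/

import Mathlib

open SimpleGraph

/-- `N[S]`: the union of closed neighbourhoods of the vertices of `S`. -/
def closedNbhd {V : Type*} (G : SimpleGraph V) (S : Set V) : Set V :=
  ⋃ v ∈ S, insert v (G.neighborSet v)

/-- A set `S` is digitally convex in `G` if every vertex `v` with `N[v] ⊆ N[S]`
belongs to `S`. -/
def DigConvex {V : Type*} (G : SimpleGraph V) (S : Set V) : Prop :=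
  ∀ v : V, insert v (G.neighborSet v) ⊆ closedNbhd G S → v ∈ S

/-- `n_D(G)`: the number of digitally convex sets of `G`. -/
noncomputable def nD {V : Type*} (G : SimpleGraph V) : ℕ :=
  Nat.card {S : Set V // DigConvex G S}

/-- A cyclic binary string `s : ZMod n → {0,1}` has all (maximal cyclic) blocks of
length at least `k`: whenever `s i ≠ s (i+1)`, the `k` bits starting at `i+1` all
equal `s (i+1)`. -/
def BlocksAtLeast {n : ℕ} (k : ℕ) (s : ZMod n → Fin 2) : Prop :=
  ∀ i : ZMod n, s i ≠ s (i + 1) → ∀ t : ℕ, 1 ≤ t → t ≤ k → s (i + (t : ZMod n)) = s (i + 1)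

/-- `a k n = |B_{k,n}|`: the number of cyclic binary strings of length `n` all of
whose blocks have length at least `k`. -/
noncomputable def numCyclicStrings (k n : ℕ) : ℕ :=
  Nat.card {s : ZMod n → Fin 2 // BlocksAtLeast k s}

/-- The `k`-th power `C_n^k` of the cycle `C_n`: distinct vertices `i j : ZMod n`
are adjacent iff `j - i ∈ {±1, ±2, …, ±k}`. -/
def cyclePow (n k : ℕ) : SimpleGraph (ZMod n) :=
  SimpleGraph.fromRel (fun i j => ∃ t : ℕ, 1 ≤ t ∧ t ≤ k ∧ j = i + (t : ZMod n))

section Aux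

variable {n k : ℕ}

lemma mem_ball {v u : ZMod n} :
    u ∈ insert v ((cyclePow n k).neighborSet v) ↔
      ∃ t : ℕ, t ≤ k ∧ (u = v + (t : ZMod n) ∨ u = v - (t : ZMod n)) := by
  rw [Set.mem_insert_iff, SimpleGraph.mem_neighborSet, cyclePow, SimpleGraph.fromRel_adj]
  constructor
  · rintro (rfl | ⟨hne, h | h⟩)
    · exact ⟨0, Nat.zero_le _, Or.inl (by push_cast; ring)⟩
    · obtain ⟨t, h1, hk', rfl⟩ := h; exact ⟨t, hk', Or.inl rfl⟩
    · obtain ⟨t, h1, hk', heq⟩ := h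
      exact ⟨t, hk', Or.inr (by rw [heq]; ring)⟩
  · rintro ⟨t, ht, h | h⟩
    · by_cases hu : u = v
      · exact Or.inl hu
      · have ht1 : 1 ≤ t := by
          rcases Nat.eq_zero_or_pos t with rfl | h1
          · exact absurd (by rw [h]; push_cast; ring) hu
          · exact h1
        exact Or.inr ⟨fun hvu => hu hvu.symm, Or.inl ⟨t, ht1, ht, h⟩⟩
    · by_cases hu : u = v
      · exact Or.inl hu
      · have ht1 : 1 ≤ t := by
          rcases Nat.eq_zero_or_pos t with rfl | h1
          · exact absurd (by rw [h]; push_cast; ring) hu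
          · exact h1
        exact Or.inr ⟨fun hvu => hu hvu.symm, Or.inr ⟨t, ht1, ht, by rw [h]; ring⟩⟩

lemma mem_cn {S : Set (ZMod n)} {x : ZMod n} :
    x ∈ closedNbhd (cyclePow n k) S ↔
      ∃ t : ℕ, t ≤ k ∧ ((x + (t : ZMod n)) ∈ S ∨ (x - (t : ZMod n)) ∈ S) := by
  simp only [closedNbhd, Set.mem_iUnion, exists_prop]
  constructor
  · rintro ⟨v, hv, hu⟩
    rw [_root_.mem_ball] at hu
    obtain ⟨t, ht, h | h⟩ := hu
    · exact ⟨t, ht, Or.inr (by rw [h]; simpa using hv)⟩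
    · exact ⟨t, ht, Or.inl (by rw [h]; simpa using hv)⟩
  · rintro ⟨t, ht, h | h⟩
    · exact ⟨x + t, h, mem_ball.2 ⟨t, ht, Or.inr (by ring)⟩⟩
    · exact ⟨x - t, h, mem_ball.2 ⟨t, ht, Or.inl (by ring)⟩⟩

lemma exists_far {S : Set (ZMod n)} (hS : DigConvex (cyclePow n k) S) {v : ZMod n} (hv : v ∉ S) :
    ∃ u : ZMod n, (∃ e : ℕ, e ≤ k ∧ (u = v + (e : ZMod n) ∨ u = v - (e : ZMod n))) ∧
      ∀ d : ℕ, d ≤ k → (u + (d : ZMod n)) ∉ S ∧ (u - (d : ZMod n)) ∉ S := by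
  by_contra h
  push_neg at h
  apply hv
  apply hS v
  intro u hu
  rw [_root_.mem_ball] at hu
  rw [mem_cn]
  rcases h u hu with ⟨d, hd, hmem⟩
  refine ⟨d, hd, ?_⟩
  by_cases h1 : u + (d : ZMod n) ∈ S
  · exact Or.inl h1
  · exact Or.inr (hmem h1)

open Classical in
noncomputable def Phi (k : ℕ) {n : ℕ} (S : Set (ZMod n)) : ZMod n → Fin 2 :=
  fun i => if ∃ t : ℕ, t ≤ k ∧ i + (t : ZMod n) ∈ S then 1 else 0

def Psi (k : ℕ) {n : ℕ} (s : ZMod n → Fin 2) : Set (ZMod n) :=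
  {j | ∀ t : ℕ, t ≤ k → s (j - (t : ZMod n)) = 1}

lemma fin2_cases (x : Fin 2) : x = 0 ∨ x = 1 := by omega

lemma Phi_eq_one {S : Set (ZMod n)} {i : ZMod n} :
    Phi k S i = 1 ↔ ∃ t : ℕ, t ≤ k ∧ i + (t : ZMod n) ∈ S := by
  classical
  unfold Phi
  split_ifs with h <;> simp [h]

lemma Phi_eq_zero {S : Set (ZMod n)} {i : ZMod n} :
    Phi k S i = 0 ↔ ∀ t : ℕ, t ≤ k → i + (t : ZMod n) ∉ S := by
  constructor
  · intro h0 t ht hmem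
    have h1 : Phi k S i = 1 := Phi_eq_one.2 ⟨t, ht, hmem⟩
    rw [h0] at h1
    exact absurd h1 (by decide)
  · intro h
    rcases fin2_cases (Phi k S i) with h0 | h1
    · exact h0
    · obtain ⟨t, ht, hm⟩ := Phi_eq_one.1 h1
      exact absurd hm (h t ht)

lemma run_lemma {s : ZMod n → Fin 2} (hs : BlocksAtLeast (k+1) s) (i : ZMod n) :
    ∃ a : ℕ, a ≤ k ∧ ∀ m : ℕ, m ≤ k → s (i - (a : ZMod n) + (m : ZMod n)) = s i := by
  classical
  by_cases h : ∀ j : ℕ, j ≤ k → s (i - (j : ZMod n)) = s i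
  · refine ⟨k, le_refl _, fun m hm => ?_⟩
    have e : (i - (k : ZMod n) + (m : ZMod n)) = i - (((k - m : ℕ)) : ZMod n) := by
      push_cast [Nat.cast_sub hm]; ring
    rw [e]; exact h _ (Nat.sub_le _ _)
  · push_neg at h
    have hex : ∃ j : ℕ, j ≤ k ∧ s (i - (j : ZMod n)) ≠ s i := h
    obtain ⟨j0, ⟨hj0k, hj0ne⟩, hminall⟩ :
        ∃ j0 : ℕ, (j0 ≤ k ∧ s (i - (j0 : ZMod n)) ≠ s i) ∧
          ∀ m : ℕ, m < j0 → ¬(m ≤ k ∧ s (i - (m : ZMod n)) ≠ s i) :=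
      ⟨Nat.find hex, Nat.find_spec hex, fun m hm => Nat.find_min hex hm⟩
    have h1 : 1 ≤ j0 := by
      by_contra h0
      apply hj0ne
      have hz : j0 = 0 := by omega
      rw [hz]; simp
    have hmin : s (i - (((j0 - 1 : ℕ)) : ZMod n)) = s i := by
      by_contra hc
      exact hminall (j0 - 1) (by omega) ⟨by omega, hc⟩
    have key : (i - (j0 : ZMod n) + 1) = i - (((j0 - 1 : ℕ)) : ZMod n) := by
      push_cast [Nat.cast_sub h1]; ring
    have hne : s (i - (j0 : ZMod n)) ≠ s (i - (j0 : ZMod n) + 1) := by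
      rw [key, hmin]; exact hj0ne
    refine ⟨j0 - 1, by omega, fun m hm => ?_⟩
    have e2 : (i - (((j0 - 1 : ℕ)) : ZMod n) + (m : ZMod n)) =
        (i - (j0 : ZMod n)) + (((m + 1 : ℕ)) : ZMod n) := by
      push_cast [Nat.cast_sub h1]; ring
    rw [e2, hs (i - (j0 : ZMod n)) hne (m+1) (by omega) (by omega), key, hmin]

lemma Phi_Psi {s : ZMod n → Fin 2} (hs : BlocksAtLeast (k+1) s) : Phi k (Psi k s) = s := by
  funext i
  rcases fin2_cases (s i) with h0 | h1
  · rw [h0, Phi_eq_zero]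
    intro t ht hmem
    simp only [Psi, Set.mem_setOf_eq] at hmem
    have h := hmem t ht
    rw [show (i + (t:ZMod n) - (t:ZMod n)) = i by ring, h0] at h
    exact absurd h (by decide)
  · rw [h1, Phi_eq_one]
    obtain ⟨a, ha, hrun⟩ := run_lemma hs i
    refine ⟨k - a, by omega, ?_⟩
    simp only [Psi, Set.mem_setOf_eq]
    intro r hr
    have e : (i + (((k - a : ℕ)):ZMod n) - (r:ZMod n)) =
        i - (a:ZMod n) + (((k - r : ℕ)):ZMod n) := by
      push_cast [Nat.cast_sub ha, Nat.cast_sub hr]; ring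
    rw [e, hrun (k - r) (by omega), h1]

lemma Psi_Phi {S : Set (ZMod n)} (hS : DigConvex (cyclePow n k) S) : Psi k (Phi k S) = S := by
  ext j
  simp only [Psi, Set.mem_setOf_eq]
  constructor
  · intro h
    by_contra hj
    obtain ⟨u, ⟨e, he, hu⟩, hfar⟩ := exists_far hS hj
    rcases hu with hu | hu
    · have h2 := h (k - e) (by omega)
      rw [Phi_eq_one] at h2
      obtain ⟨r, hr, hmem⟩ := h2
      have eq1 : (j - (((k - e : ℕ)):ZMod n) + (r:ZMod n)) = u - (((k - r : ℕ)):ZMod n) := by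
        rw [hu]; push_cast [Nat.cast_sub he, Nat.cast_sub hr]; ring
      rw [eq1] at hmem
      exact (hfar (k - r) (by omega)).2 hmem
    · have h2 := h e he
      rw [Phi_eq_one] at h2
      obtain ⟨r, hr, hmem⟩ := h2
      have eq1 : (j - (e:ZMod n) + (r:ZMod n)) = u + (r:ZMod n) := by rw [hu]
      rw [eq1] at hmem
      exact (hfar r hr).1 hmem
  · intro hj t ht
    rw [Phi_eq_one]
    exact ⟨t, ht, by rw [show j - (t:ZMod n) + (t:ZMod n) = j by ring]; exact hj⟩

lemma digConvex_Psi {s : ZMod n → Fin 2} (hs : BlocksAtLeast (k+1) s) :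
    DigConvex (cyclePow n k) (Psi k s) := by
  intro v hsub
  by_contra hv
  simp only [Psi, Set.mem_setOf_eq] at hv
  push_neg at hv
  obtain ⟨t, ht, hst⟩ := hv
  have hst0 : s (v - (t:ZMod n)) = 0 := by
    rcases fin2_cases (s (v - (t:ZMod n))) with h | h
    · exact h
    · exact absurd h hst
  obtain ⟨a, ha, hrun⟩ := run_lemma hs (v - (t:ZMod n))
  set u : ZMod n := v - (t:ZMod n) - (a:ZMod n) + (k:ZMod n) with hudef
  have huball : u ∈ insert v ((cyclePow n k).neighborSet v) := by
    rw [_root_.mem_ball]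
    by_cases hle : t + a ≤ k
    · exact ⟨k - (t + a), by omega, Or.inl (by rw [hudef]; push_cast [Nat.cast_sub hle]; ring)⟩
    · exact ⟨t + a - k, by omega,
        Or.inr (by rw [hudef]; push_cast [Nat.cast_sub (show k ≤ t + a by omega)]; ring)⟩
  have hucn := hsub huball
  rw [mem_cn] at hucn
  obtain ⟨d, hd, hmem | hmem⟩ := hucn
  · simp only [Psi, Set.mem_setOf_eq] at hmem
    have h := hmem k (le_refl k)
    have e : (u + (d:ZMod n) - (k:ZMod n)) = (v - (t:ZMod n) - (a:ZMod n) + (d:ZMod n)) := by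
      rw [hudef]; ring
    rw [e, hrun d hd, hst0] at h
    exact absurd h (by decide)
  · simp only [Psi, Set.mem_setOf_eq] at hmem
    have h := hmem (k - d) (by omega)
    have e : (u - (d:ZMod n) - (((k - d : ℕ)):ZMod n)) =
        (v - (t:ZMod n) - (a:ZMod n) + ((0:ℕ):ZMod n)) := by
      rw [hudef]; push_cast [Nat.cast_sub hd]; ring
    rw [e, hrun 0 (by omega), hst0] at h
    exact absurd h (by decide)

lemma blocks_Phi {S : Set (ZMod n)} (hS : DigConvex (cyclePow n k) S) :
    BlocksAtLeast (k+1) (Phi k S) := by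
  intro i hne t ht1 htk
  rcases fin2_cases (Phi k S (i + 1)) with h0 | h1
  · -- s(i+1) = 0, so s i = 1, i ∈ S
    have hi1 : Phi k S i = 1 := by
      rcases fin2_cases (Phi k S i) with h | h
      · rw [h0] at hne; exact absurd h hne
      · exact h
    have hz := Phi_eq_zero.1 h0
    obtain ⟨r, hr, hmem⟩ := Phi_eq_one.1 hi1
    have hr0 : r = 0 := by
      by_contra hc
      apply hz (r - 1) (by omega)
      rw [show (i + 1) + (((r - 1 : ℕ)):ZMod n) = i + (r:ZMod n) by
        push_cast [Nat.cast_sub (show 1 ≤ r by omega)]; ring]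
      exact hmem
    have hiS : i ∈ S := by
      rw [hr0] at hmem; simpa using hmem
    have hvnot : (i + 1 + (k:ZMod n)) ∉ S := hz k (le_refl k)
    obtain ⟨u, ⟨e, he, hu⟩, hfar⟩ := exists_far hS hvnot
    have hcase : ∃ e' : ℕ, e' ≤ k ∧ u = i + 1 + (k:ZMod n) + (e':ZMod n) := by
      rcases hu with hu | hu
      · exact ⟨e, he, hu⟩
      · have he0 : e = 0 := by
          by_contra hc
          have hi' : i = u - (((k + 1 - e : ℕ)):ZMod n) := by
            rw [hu]; push_cast [Nat.cast_sub (show e ≤ k + 1 by omega)]; ring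
          exact (hfar (k + 1 - e) (by omega)).2 (hi' ▸ hiS)
        exact ⟨0, by omega, by rw [hu, he0]; push_cast; ring⟩
    obtain ⟨e', he', hue⟩ := hcase
    rw [h0, Phi_eq_zero]
    intro r' hr' hmem'
    by_cases hm : t + r' ≤ k + 1
    · apply hz (t + r' - 1) (by omega)
      rw [show (i + 1) + (((t + r' - 1 : ℕ)):ZMod n) = i + (t:ZMod n) + (r':ZMod n) by
        push_cast [Nat.cast_sub (show 1 ≤ t + r' by omega)]; ring]
      exact hmem'
    · by_cases hej : e' ≤ t + r' - (k + 1)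
      · apply (hfar (t + r' - (k + 1) - e') (by omega)).1
        rw [show u + (((t + r' - (k + 1) - e' : ℕ)):ZMod n) = i + (t:ZMod n) + (r':ZMod n) by
          rw [hue]; push_cast [Nat.cast_sub hej, Nat.cast_sub (show k + 1 ≤ t + r' by omega)]; ring]
        exact hmem'
      · apply (hfar (e' - (t + r' - (k + 1))) (by omega)).2
        rw [show u - (((e' - (t + r' - (k + 1)) : ℕ)):ZMod n) = i + (t:ZMod n) + (r':ZMod n) by
          rw [hue]; push_cast [Nat.cast_sub (show t + r' - (k+1) ≤ e' by omega),
            Nat.cast_sub (show k + 1 ≤ t + r' by omega)]; ring]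
        exact hmem'
  · -- s(i+1) = 1, so s i = 0
    have hi0 : Phi k S i = 0 := by
      rcases fin2_cases (Phi k S i) with h | h
      · exact h
      · rw [h1] at hne; exact absurd h hne
    have hz := Phi_eq_zero.1 hi0
    obtain ⟨r, hr, hmem⟩ := Phi_eq_one.1 h1
    have hrk : r = k := by
      by_contra hc
      apply hz (r + 1) (by omega)
      rw [show i + (((r + 1 : ℕ)):ZMod n) = (i + 1) + (r:ZMod n) by push_cast; ring]
      exact hmem
    rw [hrk] at hmem
    rw [h1, Phi_eq_one]
    refine ⟨k + 1 - t, by omega, ?_⟩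
    rw [show i + (t:ZMod n) + (((k + 1 - t : ℕ)):ZMod n) = (i + 1) + (k:ZMod n) by
      push_cast [Nat.cast_sub (show t ≤ k + 1 by omega)]; ring]
    exact hmem

end Aux

/-- For `k ≥ 1` and `n ≥ 3`, the number of digitally convex sets of `C_n^k` equals
the number of cyclic binary strings of length `n` all of whose blocks have length
at least `k+1`: `n_D(C_n^k) = |B_{k+1,n}|`. -/
theorem nD_cyclePow_eq_cyclic_strings (k n : ℕ) (hk : 1 ≤ k) (hn : 3 ≤ n) :
    nD (cyclePow n k) = numCyclicStrings (k + 1) n := by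
  have e : {S : Set (ZMod n) // DigConvex (cyclePow n k) S} ≃
      {s : ZMod n → Fin 2 // BlocksAtLeast (k+1) s} :=
    { toFun := fun S => ⟨Phi k S.1, blocks_Phi S.2⟩
      invFun := fun s => ⟨Psi k s.1, digConvex_Psi s.2⟩
      left_inv := fun S => Subtype.ext (Psi_Phi S.2)
      right_inv := fun s => Subtype.ext (Phi_Psi s.2) }
  rw [nD, numCyclicStrings]
  exact Nat.card_congr e
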